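/- Noise exponent implies variance bound parameter ϑ: if a distribution μ on F × {±1} (F finite) has noise exponent q ∈ [0, ∞) with constant C > 0, i.e., μ_F({f : |2η(f) − 1| < t}) ≤ (C t)^q for all t > 0, then for the hinge loss clipped at 1 the variance bound holds with exponent ϑ = q/(q+1): there exists V (one may take V = 6 C^{q/(q+1)}) such that E_{f∼μ_F}[clip₁(h(f)) − clip₁(h*(f))]² ≤ V·(R(h) − R(h*))^{q/(q+1)} for all measurable h, where h* is a Bayes decision function for the clipped hinge risk. -/

import Mathlib

open Finset

private lemma clip_bounds (x : ℝ) : -1 ≤ max (-1) (min x 1) ∧ max (-1) (min x 1) ≤ 1 :=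
  ⟨le_max_left _ _, max_le (by norm_num) (min_le_right _ _)⟩

/-- The core analytic lemma: the variance bound, stated for abstract clipped functions
`s` and `sst` with values in `[-1,1]`, where `sst` is pointwise optimal on the support
of `μF` and `E` is the excess risk. -/
private lemma variance_core {F : Type*} [Fintype F]
    (μF : F → ℝ) (hμ0 : ∀ f, 0 ≤ μF f) (hμ1 : ∑ f, μF f = 1)
    (η : F → ℝ) (q C : ℝ) (hq : 0 ≤ q) (hC : 0 < C)
    (hnoise : ∀ t : ℝ, 0 < t →
      (∑ f ∈ Finset.univ.filter (fun f => |2 * η f - 1| < t), μF f) ≤ (C * t) ^ q)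
    (s sst : F → ℝ) (hs : ∀ f, |s f| ≤ 1) (hsst : ∀ f, |sst f| ≤ 1)
    (hopt : ∀ f, 0 < μF f → (1 - 2 * η f) * sst f = -|2 * η f - 1|)
    (E : ℝ) (hE : E = ∑ f, μF f * ((1 - 2 * η f) * (s f - sst f))) :
    (∑ f, μF f * (s f - sst f) ^ 2) ≤ 6 * C ^ (q / (q + 1)) * E ^ (q / (q + 1)) := by
  classical
  have hq1 : (0:ℝ) < q + 1 := by linarith
  -- each term of E is nonneg
  have habs1 : ∀ f, (1 - 2 * η f) * s f ≥ -|2 * η f - 1| := by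
    intro f
    have h1 : |(1 - 2 * η f) * s f| ≤ |2 * η f - 1| := by
      rw [abs_mul, abs_sub_comm (2 * η f) 1]
      exact mul_le_of_le_one_right (abs_nonneg _) (hs f)
    have h2 := neg_abs_le ((1 - 2 * η f) * s f)
    linarith
  have hT0 : ∀ f, 0 ≤ μF f * ((1 - 2 * η f) * (s f - sst f)) := by
    intro f
    rcases (hμ0 f).eq_or_lt with h0 | h0
    · rw [← h0]; simp
    · have h1 := hopt f h0
      have h2 := habs1 f
      have h3 : 0 ≤ (1 - 2 * η f) * (s f - sst f) := by nlinarith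
      positivity
  have hEnn : 0 ≤ E := by
    rw [hE]; exact Finset.sum_nonneg fun f _ => hT0 f
  -- key pointwise inequality on the support
  have hkey : ∀ f, μF f * (|2 * η f - 1| * |s f - sst f|)
      ≤ μF f * ((1 - 2 * η f) * (s f - sst f)) := by
    intro f
    rcases (hμ0 f).eq_or_lt with h0 | h0
    · rw [← h0]; simp
    · have h1 := hopt f h0
      have h2 := habs1 f
      have h3 : 0 ≤ (1 - 2 * η f) * (s f - sst f) := by nlinarith
      have h4 : |2 * η f - 1| * |s f - sst f| = |(1 - 2 * η f) * (s f - sst f)| := by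
        rw [abs_mul, abs_sub_comm (2 * η f) 1]
      rw [h4, abs_of_nonneg h3]
  -- pointwise bounds (s-sst)^2 ≤ 4 and ≤ 2|s-sst|
  have hd4 : ∀ f, (s f - sst f) ^ 2 ≤ 4 := by
    intro f
    have h1 := abs_le.mp (hs f)
    have h2 := abs_le.mp (hsst f)
    nlinarith [h1.1, h1.2, h2.1, h2.2]
  have hd2 : ∀ f, (s f - sst f) ^ 2 ≤ 2 * |s f - sst f| := by
    intro f
    have h1 : |s f - sst f| ≤ 2 := by
      calc |s f - sst f| ≤ |s f| + |sst f| := abs_sub _ _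
        _ ≤ 2 := by linarith [hs f, hsst f]
    have h2 : (s f - sst f) ^ 2 = |s f - sst f| ^ 2 := (sq_abs _).symm
    nlinarith [abs_nonneg (s f - sst f)]
  rcases hq.eq_or_lt with hq0 | hq0
  · -- case q = 0
    have hθ : q / (q + 1) = 0 := by rw [← hq0]; norm_num
    rw [hθ, Real.rpow_zero, Real.rpow_zero]
    have h5 : (∑ f, μF f * (s f - sst f) ^ 2) ≤ ∑ f, μF f * 4 := by
      refine Finset.sum_le_sum fun f _ => ?_
      exact mul_le_mul_of_nonneg_left (hd4 f) (hμ0 f)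
    have h4 : (∑ f, μF f * 4) = 4 := by
      rw [← Finset.sum_mul, hμ1, one_mul]
    linarith
  · -- case q > 0
    have hθpos : 0 < q / (q + 1) := div_pos hq0 hq1
    -- μF vanishes where η = 1/2
    have hnull : ∀ f, |2 * η f - 1| = 0 → μF f = 0 := by
      intro f haf
      by_contra hne
      have h0 : 0 < μF f := (hμ0 f).lt_of_ne (Ne.symm hne)
      set t : ℝ := (μF f / 2) ^ q⁻¹ / C with ht
      have htpos : 0 < t := by
        apply div_pos _ hC
        exact Real.rpow_pos_of_pos (by linarith) _
      have hmem : f ∈ Finset.univ.filter (fun f => |2 * η f - 1| < t) := by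
        simp [haf, htpos]
      have hle : μF f ≤ ∑ g ∈ Finset.univ.filter (fun f => |2 * η f - 1| < t), μF g :=
        Finset.single_le_sum (fun g _ => hμ0 g) hmem
      have hct : C * t = (μF f / 2) ^ q⁻¹ := by
        rw [ht, mul_div_cancel₀ _ (ne_of_gt hC)]
      have hn := hnoise t htpos
      rw [hct, Real.rpow_inv_rpow (by linarith) (ne_of_gt hq0)] at hn
      linarith
    rcases hEnn.eq_or_lt with hE0 | hE0
    · -- excess risk zero: LHS is zero
      have hRHS : 6 * C ^ (q / (q + 1)) * E ^ (q / (q + 1)) = 0 := by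
        rw [← hE0, Real.zero_rpow (ne_of_gt hθpos), mul_zero]
      rw [hRHS]
      apply Finset.sum_nonpos
      intro f _
      have hTz : ∀ g ∈ Finset.univ, μF g * ((1 - 2 * η g) * (s g - sst g)) = 0 := by
        rw [← Finset.sum_eq_zero_iff_of_nonneg (fun g _ => hT0 g)]
        rw [← hE, ← hE0]
      rcases (hμ0 f).eq_or_lt with h0 | h0
      · rw [← h0]; simp
      · have h1 := hkey f
        rw [hTz f (Finset.mem_univ f)] at h1
        have h2 : |2 * η f - 1| * |s f - sst f| ≤ 0 := by nlinarith
        have h3 : |2 * η f - 1| * |s f - sst f| = 0 := le_antisymm h2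
          (mul_nonneg (abs_nonneg _) (abs_nonneg _))
        rcases mul_eq_zero.mp h3 with h4 | h4
        · exact absurd (hnull f h4) (ne_of_gt h0)
        · have h5 : s f - sst f = 0 := abs_eq_zero.mp h4
          rw [h5]; simp
    · -- excess risk positive: split at threshold t
      set t : ℝ := E ^ (q + 1)⁻¹ * C ^ (-(q / (q + 1))) with htdef
      have htpos : 0 < t :=
        mul_pos (Real.rpow_pos_of_pos hE0 _) (Real.rpow_pos_of_pos hC _)
      -- rpow computations
      have hCt : (C * t) ^ q = C ^ (q / (q + 1)) * E ^ (q / (q + 1)) := by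
        have h1 : C * t = E ^ (q + 1)⁻¹ * C ^ (q + 1)⁻¹ := by
          rw [htdef]
          rw [show C * (E ^ (q + 1)⁻¹ * C ^ (-(q / (q + 1))))
              = E ^ (q + 1)⁻¹ * (C ^ (1:ℝ) * C ^ (-(q / (q + 1)))) by
            rw [Real.rpow_one]; ring]
          rw [← Real.rpow_add hC]
          congr 1
          field_simp <;> ring
        rw [h1, Real.mul_rpow (le_of_lt (Real.rpow_pos_of_pos hE0 _))
          (le_of_lt (Real.rpow_pos_of_pos hC _)),
          ← Real.rpow_mul (le_of_lt hE0), ← Real.rpow_mul (le_of_lt hC)]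
        rw [show (q + 1)⁻¹ * q = q / (q + 1) by rw [div_eq_mul_inv]; ring]
        ring
      have hEt : E / t = C ^ (q / (q + 1)) * E ^ (q / (q + 1)) := by
        have h1 : t * (C ^ (q / (q + 1)) * E ^ (q / (q + 1))) = E := by
          rw [htdef, Real.rpow_neg (le_of_lt hC)]
          rw [show E ^ (q + 1)⁻¹ * (C ^ (q / (q + 1)))⁻¹
                * (C ^ (q / (q + 1)) * E ^ (q / (q + 1)))
              = E ^ (q + 1)⁻¹ * E ^ (q / (q + 1))
                * ((C ^ (q / (q + 1)))⁻¹ * C ^ (q / (q + 1))) by ring]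
          rw [inv_mul_cancel₀ (ne_of_gt (Real.rpow_pos_of_pos hC _)), mul_one,
            ← Real.rpow_add hE0]
          rw [show (q + 1)⁻¹ + q / (q + 1) = 1 by field_simp <;> ring]
          exact Real.rpow_one E
        exact ((eq_div_iff (ne_of_gt htpos)).mpr (by linear_combination h1)).symm
      -- split the sum
      have hsplit := Finset.sum_filter_add_sum_filter_not Finset.univ
        (fun f => |2 * η f - 1| < t) (fun f => μF f * (s f - sst f) ^ 2)
      have hA : ∑ f ∈ Finset.univ.filter (fun f => |2 * η f - 1| < t),
          μF f * (s f - sst f) ^ 2 ≤ 4 * ((C * t) ^ q) := by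
        calc ∑ f ∈ Finset.univ.filter (fun f => |2 * η f - 1| < t),
              μF f * (s f - sst f) ^ 2
            ≤ ∑ f ∈ Finset.univ.filter (fun f => |2 * η f - 1| < t), 4 * μF f := by
              refine Finset.sum_le_sum fun f _ => ?_
              nlinarith [hd4 f, hμ0 f]
          _ = 4 * ∑ f ∈ Finset.univ.filter (fun f => |2 * η f - 1| < t), μF f := by
              rw [Finset.mul_sum]
          _ ≤ 4 * ((C * t) ^ q) := by linarith [hnoise t htpos]
      have hB : ∑ f ∈ Finset.univ.filter (fun f => ¬ |2 * η f - 1| < t),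
          μF f * (s f - sst f) ^ 2 ≤ (2 / t) * E := by
        calc ∑ f ∈ Finset.univ.filter (fun f => ¬ |2 * η f - 1| < t),
              μF f * (s f - sst f) ^ 2
            ≤ ∑ f ∈ Finset.univ.filter (fun f => ¬ |2 * η f - 1| < t),
              (2 / t) * (μF f * ((1 - 2 * η f) * (s f - sst f))) := by
              refine Finset.sum_le_sum fun f hf => ?_
              have hta : t ≤ |2 * η f - 1| := by
                have := (Finset.mem_filter.mp hf).2
                exact not_lt.mp this
              have h1 := hkey f
              have h2 := hd2 f
              have h3 : t * (μF f * (s f - sst f) ^ 2)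
                  ≤ 2 * (μF f * ((1 - 2 * η f) * (s f - sst f))) := by
                calc t * (μF f * (s f - sst f) ^ 2)
                    ≤ t * (μF f * (2 * |s f - sst f|)) := by
                      apply mul_le_mul_of_nonneg_left _ (le_of_lt htpos)
                      exact mul_le_mul_of_nonneg_left h2 (hμ0 f)
                  _ = 2 * (μF f * (t * |s f - sst f|)) := by ring
                  _ ≤ 2 * (μF f * (|2 * η f - 1| * |s f - sst f|)) := by
                      apply mul_le_mul_of_nonneg_left _ (by norm_num)
                      exact mul_le_mul_of_nonneg_left
                        (mul_le_mul_of_nonneg_right hta (abs_nonneg _)) (hμ0 f)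
                  _ ≤ 2 * (μF f * ((1 - 2 * η f) * (s f - sst f))) := by linarith
              rw [div_mul_eq_mul_div, le_div_iff₀ htpos]
              linarith
          _ ≤ (2 / t) * ∑ f, μF f * ((1 - 2 * η f) * (s f - sst f)) := by
              rw [← Finset.mul_sum]
              apply mul_le_mul_of_nonneg_left _ (by positivity)
              exact Finset.sum_le_sum_of_subset_of_nonneg
                (Finset.filter_subset _ _) (fun f _ _ => hT0 f)
          _ = (2 / t) * E := by rw [hE]
      have h2t : (2 / t) * E = 2 * (C ^ (q / (q + 1)) * E ^ (q / (q + 1))) := by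
        rw [← hEt]; ring
      calc (∑ f, μF f * (s f - sst f) ^ 2)
          = (∑ f ∈ Finset.univ.filter (fun f => |2 * η f - 1| < t),
              μF f * (s f - sst f) ^ 2)
            + ∑ f ∈ Finset.univ.filter (fun f => ¬ |2 * η f - 1| < t),
              μF f * (s f - sst f) ^ 2 := hsplit.symm
        _ ≤ 4 * ((C * t) ^ q) + (2 / t) * E := add_le_add hA hB
        _ = 6 * C ^ (q / (q + 1)) * E ^ (q / (q + 1)) := by
            rw [hCt, h2t]; ring

/-- Noise exponent `q` with constant `C` implies the variance bound for the clipped hinge loss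
with exponent `ϑ = q/(q+1)` and constant `V = 6 C^(q/(q+1))`. -/
theorem stmt17 {F : Type*} [Fintype F]
    (μF : F → ℝ) (hμ0 : ∀ f, 0 ≤ μF f) (hμ1 : ∑ f, μF f = 1)
    (η : F → ℝ) (hη : ∀ f, 0 ≤ η f ∧ η f ≤ 1)
    (q C : ℝ) (hq : 0 ≤ q) (hC : 0 < C)
    (hnoise : ∀ t : ℝ, 0 < t →
      (∑ f ∈ Finset.univ.filter (fun f => |2 * η f - 1| < t), μF f) ≤ (C * t) ^ q)
    (R : (F → ℝ) → ℝ)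
    (hR : ∀ h : F → ℝ, R h = ∑ f, μF f *
      (η f * max (1 - max (-1) (min (h f) 1)) 0
        + (1 - η f) * max (1 + max (-1) (min (h f) 1)) 0))
    (hstar : F → ℝ) (hBayes : ∀ h : F → ℝ, R hstar ≤ R h) :
    ∀ h : F → ℝ,
      (∑ f, μF f * (max (-1) (min (h f) 1) - max (-1) (min (hstar f) 1)) ^ 2)
        ≤ 6 * C ^ (q / (q + 1)) * (R h - R hstar) ^ (q / (q + 1)) := by
  classical
  intro h
  -- linear formula for the risk
  have hRf : ∀ g : F → ℝ,
      R g = ∑ f, μF f * (1 + max (-1) (min (g f) 1) * (1 - 2 * η f)) := by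
    intro g
    rw [hR]
    refine Finset.sum_congr rfl fun f _ => ?_
    have h1 := clip_bounds (g f)
    have e1 : max (1 - max (-1) (min (g f) 1)) 0 = 1 - max (-1) (min (g f) 1) :=
      max_eq_left (by linarith [h1.2])
    have e2 : max (1 + max (-1) (min (g f) 1)) 0 = 1 + max (-1) (min (g f) 1) :=
      max_eq_left (by linarith [h1.1])
    rw [e1, e2]; ring
  -- pointwise optimality of hstar on the support of μF
  have hopt : ∀ f, 0 < μF f →
      (1 - 2 * η f) * max (-1) (min (hstar f) 1) = -|2 * η f - 1| := by
    intro f0 hf0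
    set v : ℝ := if η f0 ≤ 1/2 then -1 else 1 with hvdef
    have hv : max (-1) (min v 1) = v := by
      rw [hvdef]; split_ifs <;> norm_num
    have hvval : v * (1 - 2 * η f0) = -|2 * η f0 - 1| := by
      by_cases hcase : η f0 ≤ 1/2
      · have : |2 * η f0 - 1| = -(2 * η f0 - 1) := abs_of_nonpos (by linarith)
        simp only [hvdef, if_pos hcase]
        rw [this]; ring
      · have : |2 * η f0 - 1| = 2 * η f0 - 1 := abs_of_nonneg (by linarith [not_le.mp hcase])
        simp only [hvdef, if_neg hcase]
        rw [this]; ring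
    have key := hBayes (Function.update hstar f0 v)
    rw [hRf hstar, hRf (Function.update hstar f0 v)] at key
    rw [← Finset.sum_erase_add _ _ (Finset.mem_univ f0),
        ← Finset.sum_erase_add _ _ (Finset.mem_univ f0)] at key
    have heq : ∑ f ∈ Finset.univ.erase f0,
          μF f * (1 + max (-1) (min (hstar f) 1) * (1 - 2 * η f))
        = ∑ f ∈ Finset.univ.erase f0,
          μF f * (1 + max (-1) (min (Function.update hstar f0 v f) 1) * (1 - 2 * η f)) := by
      refine Finset.sum_congr rfl fun f hf => ?_
      rw [Function.update_of_ne (Finset.ne_of_mem_erase hf)]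
    rw [heq] at key
    have key2 : μF f0 * (1 + max (-1) (min (hstar f0) 1) * (1 - 2 * η f0))
        ≤ μF f0 * (1 + max (-1) (min (Function.update hstar f0 v f0) 1) * (1 - 2 * η f0)) := by
      linarith
    rw [Function.update_self, hv] at key2
    have key3 : max (-1) (min (hstar f0) 1) * (1 - 2 * η f0) ≤ v * (1 - 2 * η f0) := by
      have := (mul_le_mul_iff_right₀ hf0).mp key2
      linarith
    -- other direction
    have hb := clip_bounds (hstar f0)
    have hup : -|2 * η f0 - 1| ≤ (1 - 2 * η f0) * max (-1) (min (hstar f0) 1) := by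
      have h1 : |(1 - 2 * η f0) * max (-1) (min (hstar f0) 1)| ≤ |2 * η f0 - 1| := by
        rw [abs_mul, abs_sub_comm (2 * η f0) 1]
        exact mul_le_of_le_one_right (abs_nonneg _) (abs_le.mpr ⟨hb.1, hb.2⟩)
      linarith [neg_abs_le ((1 - 2 * η f0) * max (-1) (min (hstar f0) 1))]
    have hdown : (1 - 2 * η f0) * max (-1) (min (hstar f0) 1) ≤ -|2 * η f0 - 1| := by
      calc (1 - 2 * η f0) * max (-1) (min (hstar f0) 1)
          = max (-1) (min (hstar f0) 1) * (1 - 2 * η f0) := by ring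
        _ ≤ v * (1 - 2 * η f0) := key3
        _ = -|2 * η f0 - 1| := hvval
    linarith
  -- excess risk formula
  have hE : R h - R hstar = ∑ f, μF f * ((1 - 2 * η f)
      * (max (-1) (min (h f) 1) - max (-1) (min (hstar f) 1))) := by
    rw [hRf h, hRf hstar, ← Finset.sum_sub_distrib]
    refine Finset.sum_congr rfl fun f hf => ?_
    rcases (hμ0 f).eq_or_lt with h0 | h0
    · rw [← h0]; ring
    · have h1 := hopt f h0
      nlinarith [h1]
  exact variance_core μF hμ0 hμ1 η q C hq hC hnoise
    (fun f => max (-1) (min (h f) 1)) (fun f => max (-1) (min (hstar f) 1))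
    (fun f => abs_le.mpr ⟨(clip_bounds (h f)).1, (clip_bounds (h f)).2⟩)
    (fun f => abs_le.mpr ⟨(clip_bounds (hstar f)).1, (clip_bounds (hstar f)).2⟩)
    hopt (R h - R hstar) hE
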